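/- Let H be a k-uniform hypergraph with n vertices, m ≥ 1 hyperedges, and minimum degree d_min. Then s_Q(H) ≥ 2d_min − sqrt((Z₁(H) + α/(k-1)² − 4d_min²)/(n−1)), where Z₁(H) = Σ_i d_i² is the first Zagreb index and α = Σ_{i∈V} Σ_{j∼i} d_ij². -/

import Mathlib

open Finset

/-- The set of hyperedges containing both `i` and `j`. -/
def edgesBetween {n : ℕ} (E : Finset (Finset (Fin n))) (i j : Fin n) :
    Finset (Finset (Fin n)) :=
  E.filter fun e => i ∈ e ∧ j ∈ e

/-- The degree of vertex `i`: the number of hyperedges containing `i`. -/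
def hdeg {n : ℕ} (E : Finset (Finset (Fin n))) (i : Fin n) : ℕ :=
  (E.filter fun e => i ∈ e).card

/-- Two (distinct) vertices are adjacent if some hyperedge contains both. -/
def Adj {n : ℕ} (E : Finset (Finset (Fin n))) (i j : Fin n) : Prop :=
  i ≠ j ∧ ∃ e ∈ E, i ∈ e ∧ j ∈ e

/-- The neighbours of a vertex. -/
noncomputable def neighbors {n : ℕ} (E : Finset (Finset (Fin n))) (i : Fin n) :
    Finset (Fin n) :=
  @Finset.filter _ (fun j => Adj E i j) (Classical.decPred _) Finset.univ

/-- Banerjee's adjacency matrix of a hypergraph: `A i j = ∑_{e ∋ i,j} 1/(|e|-1)`. -/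
noncomputable def adjMat {n : ℕ} (E : Finset (Finset (Fin n))) :
    Matrix (Fin n) (Fin n) ℝ :=
  Matrix.of fun i j =>
    if i = j then 0 else ∑ e ∈ edgesBetween E i j, 1 / ((e.card : ℝ) - 1)

/-- The signless Laplacian matrix `Q = D + A`. -/
noncomputable def signlessLap {n : ℕ} (E : Finset (Finset (Fin n))) :
    Matrix (Fin n) (Fin n) ℝ :=
  Matrix.diagonal (fun i => (hdeg E i : ℝ)) + adjMat E

/-- Largest eigenvalue of a real matrix. -/
noncomputable def qmax {n : ℕ} (M : Matrix (Fin n) (Fin n) ℝ) : ℝ :=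
  sSup (spectrum ℝ M)

/-- Smallest eigenvalue of a real matrix. -/
noncomputable def qmin {n : ℕ} (M : Matrix (Fin n) (Fin n) ℝ) : ℝ :=
  sInf (spectrum ℝ M)

/-- A hypergraph is `k`-uniform if every hyperedge has exactly `k` vertices. -/
def IsUniform {n : ℕ} (k : ℕ) (E : Finset (Finset (Fin n))) : Prop :=
  ∀ e ∈ E, e.card = k

/-- A hypergraph is connected if any two vertices are joined by a walk. -/
def Conn {n : ℕ} (E : Finset (Finset (Fin n))) : Prop :=
  ∀ i j : Fin n, Relation.ReflTransGen (Adj E) i j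

section Aux

open Matrix

variable {n k : ℕ} {E : Finset (Finset (Fin n))}

lemma edgesBetween_comm (E : Finset (Finset (Fin n))) (i j : Fin n) :
    edgesBetween E i j = edgesBetween E j i := by
  unfold edgesBetween
  exact Finset.filter_congr fun e _ => and_comm

lemma hdeg_eq (E : Finset (Finset (Fin n))) (i : Fin n) :
    hdeg E i = (edgesBetween E i i).card := by
  unfold hdeg edgesBetween
  congr 1
  exact (Finset.filter_congr fun e _ => (and_self_iff).symm)

lemma cardBetween (E : Finset (Finset (Fin n))) (i j : Fin n) :
    ((edgesBetween E i j).card : ℝ) = ∑ e ∈ E, (if i ∈ e ∧ j ∈ e then (1:ℝ) else 0) := by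
  rw [Finset.sum_boole]
  rfl

/-- Entries of the signless Laplacian of a uniform hypergraph. -/
lemma Qent (hU : IsUniform k E) (i j : Fin n) :
    signlessLap E i j = if i = j then ((edgesBetween E i i).card : ℝ)
      else ((edgesBetween E i j).card : ℝ) / ((k : ℝ) - 1) := by
  unfold signlessLap adjMat
  by_cases h : i = j
  · subst h
    simp [Matrix.diagonal_apply_eq, hdeg_eq]
  · simp only [Matrix.add_apply, Matrix.diagonal_apply_ne _ h, Matrix.of_apply, if_neg h,
      zero_add]
    rw [Finset.sum_congr rfl fun e he => by
      rw [hU e (Finset.mem_filter.mp he).1]]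
    rw [Finset.sum_const, nsmul_eq_mul]
    ring

lemma herm (E : Finset (Finset (Fin n))) : (signlessLap E).IsHermitian := by
  show _ = _
  ext i j
  simp only [Matrix.conjTranspose_apply, star_trivial]
  unfold signlessLap adjMat
  by_cases h : i = j
  · subst h; rfl
  · simp only [Matrix.add_apply, Matrix.of_apply, if_neg h, if_neg (Ne.symm h),
      Matrix.diagonal_apply_ne _ h, Matrix.diagonal_apply_ne _ (Ne.symm h),
      edgesBetween_comm E j i]

lemma swap1 (E : Finset (Finset (Fin n))) (x : Fin n → ℝ) :
    ∑ i : Fin n, ∑ j : Fin n, ((edgesBetween E i j).card : ℝ) * (x i * x j)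
      = ∑ e ∈ E, (∑ i ∈ e, x i) ^ 2 := by
  have key : ∀ (i j : Fin n) (e : Finset (Fin n)),
      (if i ∈ e ∧ j ∈ e then (1:ℝ) else 0) * (x i * x j)
        = (if i ∈ e then x i else 0) * (if j ∈ e then x j else 0) := by
    intro i j e
    by_cases h1 : i ∈ e <;> by_cases h2 : j ∈ e <;> simp [h1, h2]
  simp_rw [cardBetween, Finset.sum_mul, key]
  rw [show (∑ i : Fin n, ∑ j : Fin n, ∑ e ∈ E,
      (if i ∈ e then x i else 0) * (if j ∈ e then x j else 0))
      = ∑ i : Fin n, ∑ e ∈ E, ∑ j : Fin n,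
      (if i ∈ e then x i else 0) * (if j ∈ e then x j else 0) from
    Finset.sum_congr rfl fun i _ => Finset.sum_comm]
  rw [Finset.sum_comm]
  refine Finset.sum_congr rfl fun e _ => ?_
  simp_rw [← Finset.mul_sum, ← Finset.sum_mul]
  simp [Finset.sum_ite_mem, sq]

lemma swap2 (E : Finset (Finset (Fin n))) (x : Fin n → ℝ) :
    ∑ i : Fin n, ((edgesBetween E i i).card : ℝ) * (x i) ^ 2
      = ∑ e ∈ E, ∑ i ∈ e, (x i) ^ 2 := by
  simp_rw [cardBetween, Finset.sum_mul]
  rw [Finset.sum_comm]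
  refine Finset.sum_congr rfl fun e _ => ?_
  simp [and_self, ite_mul, Finset.sum_ite_mem]

lemma quadform (hU : IsUniform k E) (x : Fin n → ℝ) :
    x ⬝ᵥ (signlessLap E *ᵥ x) =
      (∑ e ∈ E, (∑ i ∈ e, x i) ^ 2) / ((k : ℝ) - 1)
        + (1 - 1 / ((k : ℝ) - 1)) * ∑ e ∈ E, ∑ i ∈ e, (x i) ^ 2 := by
  have key : ∀ i j : Fin n, x i * (signlessLap E i j * x j)
      = ((edgesBetween E i j).card : ℝ) * (x i * x j) / ((k:ℝ) - 1)
        + (if i = j then (1 - 1/((k:ℝ)-1)) * (((edgesBetween E i i).card : ℝ) * (x i)^2)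
           else 0) := by
    intro i j
    rw [Qent hU]
    by_cases h : i = j
    · subst h; rw [if_pos rfl, if_pos rfl]; ring
    · rw [if_neg h, if_neg h]; ring
  rw [← swap1 E x, ← swap2 E x]
  simp only [dotProduct, Matrix.mulVec, Finset.mul_sum]
  simp_rw [key, Finset.sum_add_distrib, Finset.sum_ite_eq, Finset.mem_univ, ite_true,
    ← Finset.sum_div]

end Aux

section Aux2

open Matrix

variable {n k : ℕ} {E : Finset (Finset (Fin n))}

lemma mem_neighbors {i j : Fin n} : j ∈ neighbors E i ↔ Adj E i j := by
  unfold neighbors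
  rw [@Finset.mem_filter _ _ (Classical.decPred _)]
  simp

lemma psdQ (hk : 2 ≤ k) (hU : IsUniform k E) : (signlessLap E).PosSemidef := by
  refine PosSemidef.of_dotProduct_mulVec_nonneg (herm E) fun x => ?_
  have hx : star x = x := funext fun i => star_trivial _
  rw [hx, quadform hU]
  have hk1 : (1:ℝ) ≤ (k:ℝ) - 1 := by
    have : (2:ℝ) ≤ (k:ℝ) := by exact_mod_cast hk
    linarith
  have h1 : 0 ≤ ∑ e ∈ E, (∑ i ∈ e, x i) ^ 2 :=
    Finset.sum_nonneg fun _ _ => sq_nonneg _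
  have h2 : 0 ≤ ∑ e ∈ E, ∑ i ∈ e, (x i) ^ 2 :=
    Finset.sum_nonneg fun _ _ => Finset.sum_nonneg fun _ _ => sq_nonneg _
  have h3 : 0 ≤ 1 - 1 / ((k:ℝ) - 1) := by
    rw [sub_nonneg]
    rw [div_le_one (by linarith)]
    linarith
  exact add_nonneg (div_nonneg h1 (by linarith)) (mul_nonneg h3 h2)

lemma traceQ2 (hU : IsUniform k E) :
    Matrix.trace (signlessLap E * signlessLap E)
      = (∑ i : Fin n, (hdeg E i : ℝ) ^ 2)
        + (∑ i : Fin n, ∑ j ∈ neighbors E i, ((edgesBetween E i j).card : ℝ) ^ 2)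
          / ((k : ℝ) - 1) ^ 2 := by
  have hsym : ∀ i j : Fin n, signlessLap E j i = signlessLap E i j := by
    intro i j
    have := congrFun (congrFun (herm E) i) j
    simpa [Matrix.conjTranspose_apply] using this
  have hQsq : ∀ i : Fin n, ∑ j : Fin n, signlessLap E i j * signlessLap E j i
      = (hdeg E i : ℝ) ^ 2
        + (∑ j ∈ neighbors E i, ((edgesBetween E i j).card : ℝ) ^ 2) / ((k : ℝ) - 1) ^ 2 := by
    intro i
    simp_rw [hsym, ← sq]
    rw [← Finset.add_sum_erase _ _ (Finset.mem_univ i)]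
    congr 1
    · rw [Qent hU, if_pos rfl, hdeg_eq]
    · have hstep : ∀ j ∈ Finset.univ.erase i,
          (signlessLap E i j) ^ 2 = ((edgesBetween E i j).card : ℝ) ^ 2 / ((k:ℝ)-1) ^ 2 := by
        intro j hj
        rw [Qent hU, if_neg (Ne.symm (Finset.ne_of_mem_erase hj)), div_pow]
      rw [Finset.sum_congr rfl hstep, ← Finset.sum_div]
      congr 1
      refine (Finset.sum_subset ?_ ?_).symm
      · intro j hj
        have := (mem_neighbors.mp hj).1
        exact Finset.mem_erase.2 ⟨Ne.symm this, Finset.mem_univ j⟩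
      · intro j hj hnj
        have hji : j ≠ i := Finset.ne_of_mem_erase hj
        have hadj : ¬ Adj E i j := fun h => hnj (mem_neighbors.mpr h)
        have hempty : edgesBetween E i j = ∅ :=
          Finset.filter_eq_empty_iff.mpr fun {e} he hcon =>
            hadj ⟨Ne.symm hji, e, he, hcon⟩
        rw [hempty]
        simp
  simp only [Matrix.trace, Matrix.diag_apply, Matrix.mul_apply]
  rw [Finset.sum_congr rfl fun i _ => hQsq i, Finset.sum_add_distrib, ← Finset.sum_div]

lemma sum_hdeg (hU : IsUniform k E) :
    ∑ i : Fin n, (hdeg E i : ℝ) = (k : ℝ) * E.card := by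
  have h : ∀ i : Fin n, ((hdeg E i : ℝ)) = ∑ e ∈ E, if i ∈ e then (1:ℝ) else 0 := by
    intro i; rw [Finset.sum_boole]; rfl
  simp_rw [h]
  rw [Finset.sum_comm]
  have h2 : ∀ e ∈ E, (∑ i : Fin n, if i ∈ e then (1:ℝ) else 0) = (k : ℝ) := by
    intro e he
    rw [Finset.sum_boole]
    simp only [Finset.filter_univ_mem]
    exact_mod_cast congrArg Nat.cast (hU e he)
  rw [Finset.sum_congr rfl h2, Finset.sum_const, nsmul_eq_mul, mul_comm]

end Aux2

section Eig

open Matrix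

variable {n : ℕ}

lemma vecMul_eq_star_mulVec (A : Matrix (Fin n) (Fin n) ℝ) (v : Fin n → ℝ) :
    v ᵥ* A = (star A) *ᵥ v := by
  rw [Matrix.star_eq_conjTranspose, Matrix.conjTranspose_eq_transpose_of_trivial,
    Matrix.mulVec_transpose]

lemma trace_sq_eq (M : Matrix (Fin n) (Fin n) ℝ) (hM : M.IsHermitian) :
    Matrix.trace (M * M) = ∑ i : Fin n, hM.eigenvalues i ^ 2 := by
  conv_lhs => rw [hM.spectral_theorem, Unitary.conjStarAlgAut_apply]
  set U := (hM.eigenvectorUnitary : Matrix (Fin n) (Fin n) ℝ) with hUdef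
  set D := Matrix.diagonal ((RCLike.ofReal ∘ hM.eigenvalues : Fin n → ℝ)) with hDdef
  have hUU : star U * U = 1 := Matrix.mem_unitaryGroup_iff'.mp (hM.eigenvectorUnitary).2
  have h1 : U * D * star U * (U * D * star U) = U * (D * D) * star U := by
    have : U * D * star U * (U * D * star U) = U * D * (star U * U) * D * star U := by
      noncomm_ring
    rw [this, hUU, mul_one]
    noncomm_ring
  rw [h1, Matrix.trace_mul_cycle, ← Matrix.mul_assoc, hUU, Matrix.one_mul,
    hDdef, Matrix.diagonal_mul_diagonal, Matrix.trace_diagonal]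
  simp [sq]

lemma rayleigh_le (M : Matrix (Fin n) (Fin n) ℝ) (hM : M.IsHermitian) (b : ℝ)
    (hb : ∀ i, hM.eigenvalues i ≤ b) (x : Fin n → ℝ) :
    x ⬝ᵥ (M *ᵥ x) ≤ b * (x ⬝ᵥ x) := by
  conv_lhs => rw [hM.spectral_theorem, Unitary.conjStarAlgAut_apply]
  set U := (hM.eigenvectorUnitary : Matrix (Fin n) (Fin n) ℝ) with hUdef
  set D := Matrix.diagonal ((RCLike.ofReal ∘ hM.eigenvalues : Fin n → ℝ)) with hDdef
  have hUU : U * star U = 1 := Matrix.mem_unitaryGroup_iff.mp (hM.eigenvectorUnitary).2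
  set y := (star U) *ᵥ x with hydef
  have h1 : x ⬝ᵥ ((U * D * star U) *ᵥ x) = y ⬝ᵥ (D *ᵥ y) := by
    rw [← Matrix.mulVec_mulVec, ← Matrix.mulVec_mulVec, Matrix.dotProduct_mulVec x U,
      vecMul_eq_star_mulVec, hydef]
  have h2 : y ⬝ᵥ y = x ⬝ᵥ x := by
    rw [hydef, Matrix.dotProduct_mulVec, vecMul_eq_star_mulVec, star_star,
      Matrix.mulVec_mulVec, hUU, Matrix.one_mulVec]
  have h3 : y ⬝ᵥ (D *ᵥ y) = ∑ i : Fin n, hM.eigenvalues i * (y i) ^ 2 := by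
    rw [hDdef]
    simp only [dotProduct, Matrix.mulVec_diagonal]
    refine Finset.sum_congr rfl fun i _ => ?_
    simp [sq]
    ring
  rw [h1, h3, ← h2]
  have : (b * (y ⬝ᵥ y)) = ∑ i : Fin n, b * (y i) ^ 2 := by
    simp only [dotProduct, Finset.mul_sum, sq]
  rw [this]
  exact Finset.sum_le_sum fun i _ =>
    mul_le_mul_of_nonneg_right (hb i) (sq_nonneg _)

end Eig

open Matrix

theorem stmt_19 (n k : ℕ) (hn : 2 ≤ n) (hk : 2 ≤ k) (E : Finset (Finset (Fin n)))
    (hU : IsUniform k E) (hm : 1 ≤ E.card) :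
    qmax (signlessLap E) - qmin (signlessLap E) ≥
      2 * (⨅ i : Fin n, (hdeg E i : ℝ)) -
        Real.sqrt (((∑ i : Fin n, (hdeg E i : ℝ) ^ 2) +
            (∑ i : Fin n, ∑ j ∈ neighbors E i, ((edgesBetween E i j).card : ℝ) ^ 2) /
              ((k : ℝ) - 1) ^ 2 -
            4 * (⨅ i : Fin n, (hdeg E i : ℝ)) ^ 2) / ((n : ℝ) - 1)) := by
  have hnne : Nonempty (Fin n) := ⟨⟨0, by omega⟩⟩
  have hQ : (signlessLap E).IsHermitian := herm E
  set μ := hQ.eigenvalues with hμdef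
  have hspec : spectrum ℝ (signlessLap E) = Set.range μ := hQ.spectrum_real_eq_range_eigenvalues
  have hfin : (Set.range μ).Finite := Set.finite_range μ
  have hne : (Set.range μ).Nonempty := Set.range_nonempty μ
  have hq1mem : qmax (signlessLap E) ∈ Set.range μ := by
    unfold qmax; rw [hspec]; exact hne.csSup_mem hfin
  have hqnmem : qmin (signlessLap E) ∈ Set.range μ := by
    unfold qmin; rw [hspec]; exact hne.csInf_mem hfin
  have hle : ∀ i, μ i ≤ qmax (signlessLap E) := fun i => by
    unfold qmax; rw [hspec]; exact le_csSup hfin.bddAbove ⟨i, rfl⟩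
  have hqle : ∀ i, qmin (signlessLap E) ≤ μ i := fun i => by
    unfold qmin; rw [hspec]; exact csInf_le hfin.bddBelow ⟨i, rfl⟩
  obtain ⟨i0, hi0⟩ := hq1mem
  set d := ⨅ i : Fin n, (hdeg E i : ℝ) with hddef
  have hd0 : 0 ≤ d := le_ciInf fun i => Nat.cast_nonneg _
  have hdle : ∀ i, d ≤ (hdeg E i : ℝ) := fun i => ciInf_le (Finite.bddBelow_range _) i
  have hk2 : (2:ℝ) ≤ (k:ℝ) := by exact_mod_cast hk
  have hn2 : (2:ℝ) ≤ (n:ℝ) := by exact_mod_cast hn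
  have hm1 : (1:ℝ) ≤ (E.card:ℝ) := by exact_mod_cast hm
  -- the Rayleigh quotient bound with the all-ones vector
  have hform : (fun _ : Fin n => (1:ℝ)) ⬝ᵥ (signlessLap E *ᵥ fun _ => (1:ℝ))
      = 2 * (k:ℝ) * E.card := by
    rw [quadform hU]
    have h1 : ∀ e ∈ E, (∑ _i ∈ e, (1:ℝ)) = (k:ℝ) := by
      intro e he
      rw [Finset.sum_const, nsmul_eq_mul, mul_one]
      exact_mod_cast congrArg Nat.cast (hU e he)
    simp only [one_pow]
    rw [Finset.sum_congr rfl fun e he => by rw [h1 e he],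
        Finset.sum_congr rfl fun e he => h1 e he]
    rw [Finset.sum_const, Finset.sum_const, nsmul_eq_mul, nsmul_eq_mul]
    have hknz : (k:ℝ) - 1 ≠ 0 := by linarith
    field_simp
    ring
  have hones : (fun _ : Fin n => (1:ℝ)) ⬝ᵥ (fun _ : Fin n => (1:ℝ)) = (n:ℝ) := by
    simp [dotProduct]
  have hq1 : 2 * d ≤ qmax (signlessLap E) := by
    have hr := rayleigh_le _ hQ _ hle (fun _ => (1:ℝ))
    rw [hform, hones] at hr
    have hsum : (n:ℝ) * d ≤ (k:ℝ) * E.card := by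
      rw [← sum_hdeg hU]
      calc (n:ℝ) * d = ∑ _i : Fin n, d := by
            rw [Finset.sum_const, Finset.card_univ, Fintype.card_fin, nsmul_eq_mul]
        _ ≤ ∑ i : Fin n, (hdeg E i : ℝ) := Finset.sum_le_sum fun i _ => hdle i
    nlinarith [hr, hsum]
  have hqn0 : 0 ≤ qmin (signlessLap E) := by
    obtain ⟨i1, hi1⟩ := hqnmem
    rw [← hi1]
    exact (psdQ hk hU).eigenvalues_nonneg i1
  have htr : ∑ i : Fin n, μ i ^ 2
      = (∑ i : Fin n, (hdeg E i : ℝ) ^ 2)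
        + (∑ i : Fin n, ∑ j ∈ neighbors E i, ((edgesBetween E i j).card : ℝ) ^ 2)
          / ((k : ℝ) - 1) ^ 2 := by
    rw [← trace_sq_eq _ hQ, traceQ2 hU]
  have hsub : ((n:ℝ) - 1) * qmin (signlessLap E) ^ 2
      ≤ (∑ i : Fin n, μ i ^ 2) - qmax (signlessLap E) ^ 2 := by
    have hsplit : ∑ i : Fin n, μ i ^ 2
        = μ i0 ^ 2 + ∑ i ∈ Finset.univ.erase i0, μ i ^ 2 :=
      (Finset.add_sum_erase _ _ (Finset.mem_univ i0)).symm
    have hsum2 : ∑ _i ∈ Finset.univ.erase i0, qmin (signlessLap E) ^ 2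
        ≤ ∑ i ∈ Finset.univ.erase i0, μ i ^ 2 :=
      Finset.sum_le_sum fun i _ => pow_le_pow_left₀ hqn0 (hqle i) 2
    rw [Finset.sum_const, Finset.card_erase_of_mem (Finset.mem_univ i0),
      Finset.card_univ, Fintype.card_fin, nsmul_eq_mul] at hsum2
    have hcast : ((n - 1 : ℕ) : ℝ) = (n:ℝ) - 1 := by
      have h1n : 1 ≤ n := by omega
      rw [Nat.cast_sub h1n, Nat.cast_one]
    rw [hcast] at hsum2
    rw [← hi0]
    linarith [hsplit, hsum2]
  have hq1sq : (2 * d) ^ 2 ≤ qmax (signlessLap E) ^ 2 :=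
    pow_le_pow_left₀ (by linarith) hq1 2
  have hqnsq : qmin (signlessLap E) ^ 2
      ≤ ((∑ i : Fin n, (hdeg E i : ℝ) ^ 2) +
            (∑ i : Fin n, ∑ j ∈ neighbors E i, ((edgesBetween E i j).card : ℝ) ^ 2) /
              ((k : ℝ) - 1) ^ 2 -
            4 * d ^ 2) / ((n : ℝ) - 1) := by
    rw [le_div_iff₀ (by linarith)]
    nlinarith [hsub, hq1sq, htr]
  have hfinal : qmin (signlessLap E)
      ≤ Real.sqrt (((∑ i : Fin n, (hdeg E i : ℝ) ^ 2) +
            (∑ i : Fin n, ∑ j ∈ neighbors E i, ((edgesBetween E i j).card : ℝ) ^ 2) /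
              ((k : ℝ) - 1) ^ 2 -
            4 * d ^ 2) / ((n : ℝ) - 1)) := by
    calc qmin (signlessLap E) = Real.sqrt (qmin (signlessLap E) ^ 2) :=
          (Real.sqrt_sq hqn0).symm
      _ ≤ _ := Real.sqrt_le_sqrt hqnsq
  linarith [hq1, hfinal]
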